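/- arXiv:math-ph/0510011 — 2 statements merged into one kernel-verified Lean document; each statement's English description precedes it below -/
import Mathlib

section
/- Under the hypotheses of the previous setting, suppose additionally that for every x ∈ X there exists g ∈ G with g·x ∈ Y, that N_y = N for all y ∈ Y, and that N/K has order d. Then for every x ∈ X the fiber φ⁻¹(x) of φ : (G/K) × Y → X has exactly d points. -/
open Pointwise

/-- With `K` the pointwise and `N` the setwise stabilizer of `Y ⊆ X` and
`φ : G/K × Y → X`, `φ([g], y) = g • y`, suppose every `x ∈ X` can be moved into `Y`
(invariance), `N_y = N` for every `y ∈ Y`, and `N/K` has order `d`. Then every fiber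
`φ⁻¹(x)` has exactly `d` points. -/
theorem stmt_5 {G X : Type*} [Group G] [MulAction G X] (Y : Set X)
    (K N : Subgroup G)
    (hK : (K : Set G) = {g : G | ∀ y ∈ Y, g • y = y})
    (hN : (N : Set G) = {g : G | g • Y = Y})
    (φ : (G ⧸ K) × Y → X)
    (hφ : ∀ (g : G) (y : Y), φ ((g : G ⧸ K), y) = g • (y : X))
    (hinv : ∀ x : X, ∃ g : G, g • x ∈ Y)
    (hNy : ∀ y ∈ Y, ∀ g : G, g • y ∈ Y → g ∈ N)
    (d : ℕ) (hd : Nat.card (N ⧸ K.subgroupOf N) = d) :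
    ∀ x : X, Nat.card (φ ⁻¹' {x}) = d := by
  intro x
  obtain ⟨g₀, hy₀⟩ := hinv x
  have hKmem : ∀ k : G, k ∈ K ↔ ∀ y ∈ Y, k • y = y := by
    intro k
    rw [← SetLike.mem_coe, hK]; exact Iff.rfl
  have hNY : ∀ n : G, n ∈ N → ∀ y ∈ Y, n • y ∈ Y := by
    intro n hn y hy
    rw [← SetLike.mem_coe, hN] at hn
    rw [← hn]
    exact Set.smul_mem_smul_set hy
  -- the map N → fiber
  have mem₂ : ∀ n : N, (n : G)⁻¹ • (g₀ • x) ∈ Y :=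
    fun n => hNY _ (N.inv_mem n.2) _ hy₀
  have memfib : ∀ n : N,
      (((g₀⁻¹ * (n : G) : G) : G ⧸ K), (⟨(n : G)⁻¹ • (g₀ • x), mem₂ n⟩ : Y)) ∈ φ ⁻¹' {x} := by
    intro n
    simp only [Set.mem_preimage, Set.mem_singleton_iff, hφ]
    simp [smul_smul, mul_assoc]
  set f' : N → (φ ⁻¹' {x} : Set ((G ⧸ K) × Y)) := fun n =>
    ⟨(((g₀⁻¹ * (n : G) : G) : G ⧸ K), ⟨(n : G)⁻¹ • (g₀ • x), mem₂ n⟩), memfib n⟩ with hf'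
  have hresp : ∀ a b : N, QuotientGroup.leftRel (K.subgroupOf N) a b → f' a = f' b := by
    intro a b hab
    rw [QuotientGroup.leftRel_apply, Subgroup.mem_subgroupOf] at hab
    have hk : ((a : G)⁻¹ * b) ∈ K := hab
    have hcoset : (((g₀⁻¹ * (a : G) : G) : G ⧸ K)) = ((g₀⁻¹ * (b : G) : G) : G ⧸ K) := by
      rw [QuotientGroup.eq]
      simpa [mul_assoc] using hk
    have hy : (a : G)⁻¹ • (g₀ • x) = (b : G)⁻¹ • (g₀ • x) := by
      have := (hKmem _).mp hk _ (mem₂ a)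
      calc (a : G)⁻¹ • (g₀ • x) = ((a : G)⁻¹ * (b : G)) • ((b : G)⁻¹ • (g₀ • x)) := by
            simp [smul_smul, mul_assoc]
        _ = (b : G)⁻¹ • (g₀ • x) := (hKmem _).mp hk _ (mem₂ b)
    simp only [hf', Subtype.mk.injEq, Prod.mk.injEq, hcoset, true_and]
    exact hy
  set f : (N ⧸ K.subgroupOf N) → (φ ⁻¹' {x} : Set ((G ⧸ K) × Y)) :=
    fun q => Quotient.liftOn' q f' hresp with hf
  have hbij : Function.Bijective f := by
    constructor
    · intro q1 q2
      refine Quotient.inductionOn₂' q1 q2 ?_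
      intro a b hab
      have h1 : (((g₀⁻¹ * (a : G) : G) : G ⧸ K)) = ((g₀⁻¹ * (b : G) : G) : G ⧸ K) :=
        congrArg (fun z => (z : (φ ⁻¹' {x} : Set ((G ⧸ K) × Y))).1.1) hab
      rw [QuotientGroup.eq] at h1
      have hk : ((a : G)⁻¹ * b) ∈ K := by
        have : (g₀⁻¹ * (a:G))⁻¹ * (g₀⁻¹ * (b:G)) = (a:G)⁻¹ * b := by group
        rwa [this] at h1
      apply Quotient.sound'
      rw [QuotientGroup.leftRel_apply, Subgroup.mem_subgroupOf]
      exact hk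
    · rintro ⟨⟨q, y⟩, hmem⟩
      obtain ⟨g, rfl⟩ := QuotientGroup.mk_surjective q
      simp only [Set.mem_preimage, Set.mem_singleton_iff, hφ] at hmem
      have hnY : (g₀ * g) • (y : X) ∈ Y := by
        rw [mul_smul, hmem]; exact hy₀
      have hn : g₀ * g ∈ N := hNy _ y.2 _ hnY
      refine ⟨QuotientGroup.mk (⟨g₀ * g, hn⟩ : N), ?_⟩
      apply Subtype.ext
      refine Prod.ext ?_ ?_
      · show (((g₀⁻¹ * (g₀ * g) : G) : G ⧸ K)) = (g : G ⧸ K)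
        congr 1
        group
      · apply Subtype.ext
        show (g₀ * g)⁻¹ • (g₀ • x) = (y : X)
        rw [← hmem]
        simp [smul_smul, mul_assoc]
  rw [← hd]
  exact (Nat.card_eq_of_bijective f hbij).symm
end

section
/- Let G be a Lie group acting smoothly on a smooth manifold X, Y a closed submanifold, K the pointwise stabilizer of Y, and φ : (G/K) × Y → X, φ([g],y) = g·y. Suppose: (a) X = ⋃_{y∈Y} G·y; (b) T_yX = T_y(G·y) ⊕ T_yY for all y ∈ Y; (c) dim G_y = dim K for all y ∈ Y, where G_y is the isotropy group; the map φ is everywhere regular; N/K is a finite group of order d, where N is the setwise stabilizer of Y; and N_y = N for every y ∈ Y. Then φ : (G/K) × Y → X is a d-sheeted covering map. -/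
open Manifold Pointwise

/-- Main theorem. `G` a Lie group acting smoothly on a smooth manifold `X`,
`Y` a closed submanifold (realized as a closed subset carrying a smooth structure for
which the inclusion is a smooth immersion), `K` the pointwise stabilizer of `Y`, and
`φ : G/K × Y → X`, `φ([g], y) = g • y`. Assume:
(a) invariance: `X = ⋃_{y ∈ Y} G • y`;
(b) transversality: `T_yX = T_y(G•y) ⊕ T_yY` for all `y ∈ Y`;
(c) dimension: `dim G_y = dim K` for all `y ∈ Y` (expressed via the Lie algebras of the
    stabilizers, i.e. the kernels of the differentials of the orbit maps at `1`);
`φ` is everywhere regular (being a regular map between manifolds of equal dimension,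
this is expressed as: `φ` is a local homeomorphism);
`N/K` is finite of order `d`, where `N` is the setwise stabilizer of `Y`;
and `N_y = N` for all `y ∈ Y`. Then `φ` is a `d`-sheeted covering map. -/
theorem stmt_6 {m n r : ℕ} {G X : Type*}
    [TopologicalSpace G] [ChartedSpace (EuclideanSpace ℝ (Fin m)) G]
    [Group G] [IsTopologicalGroup G] [LieGroup (𝓡 m) (⊤ : ℕ∞) G]
    [TopologicalSpace X] [ChartedSpace (EuclideanSpace ℝ (Fin n)) X]
    [IsManifold (𝓡 n) (⊤ : ℕ∞) X]
    [MulAction G X]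
    (hsmooth : ContMDiff ((𝓡 m).prod (𝓡 n)) (𝓡 n) (⊤ : ℕ∞) (fun p : G × X => p.1 • p.2))
    (Y : Set X) (hYclosed : IsClosed Y)
    [ChartedSpace (EuclideanSpace ℝ (Fin r)) Y] [IsManifold (𝓡 r) (⊤ : ℕ∞) Y]
    (hincl : ContMDiff (𝓡 r) (𝓡 n) (⊤ : ℕ∞) ((↑) : Y → X))
    (himm : ∀ y : Y, Function.Injective (mfderiv (𝓡 r) (𝓡 n) ((↑) : Y → X) y))
    (K N : Subgroup G)
    (hK : (K : Set G) = {g : G | ∀ y ∈ Y, g • y = y})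
    (hN : (N : Set G) = {g : G | g • Y = Y})
    (φ : (G ⧸ K) × Y → X)
    (hφ : ∀ (g : G) (y : Y), φ ((g : G ⧸ K), y) = g • (y : X))
    -- (a) invariance condition
    (hinv : ∀ x : X, ∃ g : G, ∃ y ∈ Y, g • y = x)
    -- (b) transversality condition
    (htrans : ∀ y : Y,
      IsCompl
        (LinearMap.range ((mfderiv (𝓡 m) (𝓡 n) (fun g : G => g • (y : X)) 1 :
          TangentSpace (𝓡 m) (1 : G) →ₗ[ℝ] TangentSpace (𝓡 n) ((1 : G) • (y : X)))))
        (LinearMap.range ((mfderiv (𝓡 r) (𝓡 n) ((↑) : Y → X) y :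
          TangentSpace (𝓡 r) y →ₗ[ℝ] TangentSpace (𝓡 n) (y : X))) :
          Submodule ℝ (TangentSpace (𝓡 n) ((1 : G) • (y : X)))))
    -- (c) dimension condition: dim G_y = dim K
    (hdim : ∀ y : Y,
      Module.finrank ℝ
        (LinearMap.ker ((mfderiv (𝓡 m) (𝓡 n) (fun g : G => g • (y : X)) 1 :
          TangentSpace (𝓡 m) (1 : G) →ₗ[ℝ] TangentSpace (𝓡 n) ((1 : G) • (y : X))))) =
      Module.finrank ℝ
        ↥(⨅ y' : Y, LinearMap.ker ((mfderiv (𝓡 m) (𝓡 n) (fun g : G => g • (y' : X)) 1 :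
          TangentSpace (𝓡 m) (1 : G) →ₗ[ℝ] TangentSpace (𝓡 n) ((1 : G) • (y' : X))))))
    -- φ is everywhere regular
    (hreg : IsLocalHomeomorph φ)
    (d : ℕ) (hd : Nat.card (N ⧸ K.subgroupOf N) = d)
    (hNy : ∀ y ∈ Y, ∀ g : G, g • y ∈ Y → g ∈ N) :
    IsCoveringMap φ ∧ ∀ x : X, Nat.card (φ ⁻¹' {x}) = d := by
  classical
  have hcont : Continuous fun p : G × X => p.1 • p.2 := hsmooth.continuous
  have hsmulcont : ∀ g : G, Continuous fun x : X => g • x := fun g =>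
    hcont.comp (continuous_const.prodMk continuous_id)
  have hKmem : ∀ g : G, g ∈ K ↔ ∀ y ∈ Y, g • y = y := fun g => by
    rw [← SetLike.mem_coe, hK]; rfl
  have hNmem : ∀ g : G, g ∈ N ↔ g • Y = Y := fun g => by
    rw [← SetLike.mem_coe, hN]; rfl
  have hNsmul : ∀ g : G, g ∈ N → ∀ y : X, y ∈ Y → g • y ∈ Y := by
    intro g hg y hy
    rw [hNmem] at hg
    rw [← hg]
    exact Set.smul_mem_smul_set hy
  have hconj : ∀ nn : G, nn ∈ N → ∀ k : G, k ∈ K → nn * k * nn⁻¹ ∈ K := by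
    intro nn hn k hk
    rw [hKmem] at hk ⊢
    intro y hy
    have h1 : nn⁻¹ • y ∈ Y := hNsmul _ (inv_mem hn) y hy
    have h2 := hk _ h1
    calc (nn * k * nn⁻¹) • y = nn • k • nn⁻¹ • y := by rw [mul_smul, mul_smul]
    _ = nn • nn⁻¹ • y := by rw [h2]
    _ = y := smul_inv_smul _ _
  -- deck transformations indexed by `N`
  let D : N → (G ⧸ K) × Y → (G ⧸ K) × Y := fun nn p =>
    (Quotient.map' (fun g => g * (nn : G)⁻¹)
      (fun a b hab => by
        rw [QuotientGroup.leftRel_apply] at hab ⊢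
        have h : (a * (nn : G)⁻¹)⁻¹ * (b * (nn : G)⁻¹)
            = (nn : G) * (a⁻¹ * b) * (nn : G)⁻¹ := by group
        rw [h]
        exact hconj _ nn.2 _ hab) p.1,
     ⟨(nn : G) • (p.2 : X), hNsmul _ nn.2 _ p.2.2⟩)
  have hD_mk : ∀ (nn : N) (g : G) (y : Y),
      D nn ((g : G ⧸ K), y) = ((↑(g * (nn : G)⁻¹) : G ⧸ K),
        ⟨(nn : G) • (y : X), hNsmul _ nn.2 _ y.2⟩) := fun nn g y => rfl
  have hDφ : ∀ (nn : N) p, φ (D nn p) = φ p := by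
    rintro nn ⟨p1, y⟩
    obtain ⟨g, rfl⟩ := QuotientGroup.mk_surjective p1
    rw [hD_mk, hφ, hφ]
    show (g * (nn : G)⁻¹) • ((nn : G) • (y : X)) = g • (y : X)
    rw [smul_smul, inv_mul_cancel_right]
  have hDcont : ∀ nn : N, Continuous (D nn) := by
    intro nn
    apply Continuous.prodMk
    · exact (Continuous.quotient_map' (continuous_mul_right _) _).comp continuous_fst
    · exact (((hsmulcont _).comp continuous_subtype_val).comp continuous_snd).subtype_mk _
  have hDcomp : ∀ (nn mm : N) p, D nn (D mm p) = D (nn * mm) p := by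
    rintro nn mm ⟨p1, y⟩
    obtain ⟨g, rfl⟩ := QuotientGroup.mk_surjective p1
    rw [hD_mk, hD_mk, hD_mk]
    refine Prod.ext (congrArg QuotientGroup.mk ?_) (Subtype.ext ?_)
    · push_cast; group
    · show (nn : G) • (mm : G) • (y : X) = ((nn * mm : N) : G) • (y : X)
      push_cast [mul_smul]
      rfl
  have hDone : ∀ nn : N, (nn : G) ∈ K → ∀ p, D nn p = p := by
    rintro nn hk ⟨p1, y⟩
    obtain ⟨g, rfl⟩ := QuotientGroup.mk_surjective p1
    rw [hD_mk]
    refine Prod.ext ?_ (Subtype.ext ?_)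
    · show (↑(g * (nn : G)⁻¹) : G ⧸ K) = ↑g
      rw [QuotientGroup.eq]
      have h : (g * (nn : G)⁻¹)⁻¹ * g = (nn : G) := by group
      rw [h]; exact hk
    · rw [hKmem] at hk
      exact hk _ y.2
  have hDinv : ∀ (nn : N) p, D nn⁻¹ (D nn p) = p := by
    intro nn p
    rw [hDcomp, inv_mul_cancel]
    exact hDone 1 (by simpa using K.one_mem) p
  have hDfree : ∀ (nn : N) p, D nn p = p → (nn : G) ∈ K := by
    rintro nn ⟨p1, y⟩ h
    obtain ⟨g, rfl⟩ := QuotientGroup.mk_surjective p1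
    rw [hD_mk] at h
    have h1 : (↑(g * (nn : G)⁻¹) : G ⧸ K) = ↑g := congrArg Prod.fst h
    rw [QuotientGroup.eq] at h1
    have h2 : (g * (nn : G)⁻¹)⁻¹ * g = (nn : G) := by group
    rwa [h2] at h1
  have hDtrans : ∀ p q, φ p = φ q → ∃ nn : N, q = D nn p := by
    rintro ⟨p1, y⟩ ⟨q1, y'⟩ h
    obtain ⟨g, rfl⟩ := QuotientGroup.mk_surjective p1
    obtain ⟨g', rfl⟩ := QuotientGroup.mk_surjective q1
    rw [hφ, hφ] at h
    have hyY : (g'⁻¹ * g) • (y : X) ∈ Y := by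
      rw [mul_smul, h, inv_smul_smul]
      exact y'.2
    have hnN : g'⁻¹ * g ∈ N := hNy _ y.2 _ hyY
    refine ⟨⟨g'⁻¹ * g, hnN⟩, ?_⟩
    rw [hD_mk]
    refine Prod.ext (congrArg QuotientGroup.mk (by group)) (Subtype.ext ?_)
    show (y' : X) = (g'⁻¹ * g) • (y : X)
    rw [mul_smul, h, inv_smul_smul]
  -- main construction at every point of the base
  have key : ∀ x : X, IsEvenlyCovered φ x (φ ⁻¹' {x}) ∧ Nat.card (φ ⁻¹' {x}) = d := by
    intro x
    obtain ⟨g₀, y₀, hy₀, hg₀⟩ := hinv x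
    have he₀ : φ ((g₀ : G ⧸ K), ⟨y₀, hy₀⟩) = x := by rw [hφ]; exact hg₀
    set e₀ : (G ⧸ K) × Y := ((g₀ : G ⧸ K), ⟨y₀, hy₀⟩) with he₀def
    obtain ⟨ch, hsrc, hcheq⟩ := hreg e₀
    have hφch : ∀ z, φ z = ch z := fun z => congrFun hcheq z
    -- fibers are discrete
    haveI hdisc : DiscreteTopology ↥(φ ⁻¹' {x}) := by
      refine discreteTopology_iff_isOpen_singleton.mpr fun q => ?_
      obtain ⟨c, hc, hceq⟩ := hreg q.1
      have hcfun : ∀ z, φ z = c z := fun z => congrFun hceq z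
      have hset : {q} = (Subtype.val ⁻¹' c.source : Set ↥(φ ⁻¹' {x})) := by
        ext q'
        simp only [Set.mem_singleton_iff, Set.mem_preimage]
        constructor
        · rintro rfl; exact hc
        · intro hq'
          have hph : φ q'.1 = φ q.1 := by
            rw [Set.mem_singleton_iff.mp q'.2, Set.mem_singleton_iff.mp q.2]
          rw [hcfun, hcfun] at hph
          exact Subtype.ext (c.injOn hq' hc hph)
      rw [hset]
      exact c.open_source.preimage continuous_subtype_val
    have hchoice : ∀ q : ↥(φ ⁻¹' {x}), ∃ nn : N, q.1 = D nn e₀ := fun q =>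
      hDtrans e₀ q.1 (he₀.trans (Set.mem_singleton_iff.mp q.2).symm)
    choose sect hsect using hchoice
    have huniq : ∀ (nn mm : N) u u', u ∈ ch.source → u' ∈ ch.source →
        D nn u = D mm u' → u = u' ∧ ∀ p, D nn p = D mm p := by
      intro nn mm u u' hu hu' h
      have hphi : φ u = φ u' := by rw [← hDφ nn u, h, hDφ]
      rw [hφch, hφch] at hphi
      have huu : u = u' := ch.injOn hu hu' hphi
      rw [← huu] at h
      have hfix : D (mm⁻¹ * nn) u = u := by rw [← hDcomp, h, hDinv]
      have hk : ((mm⁻¹ * nn : N) : G) ∈ K := hDfree _ u hfix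
      refine ⟨huu, fun p => ?_⟩
      have hnm : nn = mm * (mm⁻¹ * nn) := by group
      conv_lhs => rw [hnm]
      rw [← hDcomp, hDone _ hk]
    -- the sheets
    set S : ↥(φ ⁻¹' {x}) → Set ((G ⧸ K) × Y) := fun q => D (sect q) '' ch.source with hSdef
    have hSopen : ∀ q, IsOpen (S q) := by
      intro q
      have himg : S q = D (sect q)⁻¹ ⁻¹' ch.source := by
        ext p
        simp only [hSdef, Set.mem_image, Set.mem_preimage]
        constructor
        · rintro ⟨u, hu, rfl⟩; rwa [hDinv]
        · intro hp
          exact ⟨_, hp, by simpa using hDinv (sect q)⁻¹ p⟩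
      rw [himg]
      exact ch.open_source.preimage (hDcont _)
    have hSunique : ∀ p q q', p ∈ S q → p ∈ S q' → q = q' := by
      rintro p q q' ⟨u, hu, hup⟩ ⟨u', hu', hup'⟩
      have h := huniq _ _ u u' hu hu' (hup.trans hup'.symm)
      exact Subtype.ext (by rw [hsect q, hsect q', h.2 e₀])
    have he₀fib : e₀ ∈ φ ⁻¹' {x} := he₀
    set idx : (G ⧸ K) × Y → ↥(φ ⁻¹' {x}) :=
      fun p => if h : ∃ q, p ∈ S q then h.choose else ⟨e₀, he₀fib⟩ with hidxdef
    have hidx : ∀ p q, p ∈ S q → idx p = q := by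
      intro p q hp
      have hex : ∃ q, p ∈ S q := ⟨q, hp⟩
      have h1 : idx p = hex.choose := dif_pos hex
      rw [h1]
      exact hSunique p _ q hex.choose_spec hp
    have hexists : ∀ p, φ p ∈ ch.target → ∃ q, p ∈ S q := by
      intro p hp
      have hu : ch.symm (φ p) ∈ ch.source := ch.map_target hp
      have hphiu : φ (ch.symm (φ p)) = φ p := (hφch _).trans (ch.right_inv hp)
      obtain ⟨nn, hnn⟩ := hDtrans (ch.symm (φ p)) p hphiu
      have hqmem : D nn e₀ ∈ φ ⁻¹' {x} := by
        refine Set.mem_preimage.mpr ?_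
        rw [hDφ]
        exact Set.mem_singleton_iff.mpr he₀
      refine ⟨⟨D nn e₀, hqmem⟩, ?_⟩
      have hs : D nn e₀ = D (sect ⟨D nn e₀, hqmem⟩) e₀ := hsect ⟨D nn e₀, hqmem⟩
      have hsq := (huniq _ nn e₀ e₀ hsrc hsrc hs.symm).2
      exact ⟨ch.symm (φ p), hu, by rw [hsq]; exact hnn.symm⟩
    have hxbase : x ∈ ch.target := by
      rw [← he₀, hφch]
      exact ch.map_source hsrc
    -- the trivialization
    let triv : Bundle.Trivialization ↥(φ ⁻¹' {x}) φ :=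
      { toFun := fun p => (φ p, idx p)
        invFun := fun z => D (sect z.2) (ch.symm z.1)
        source := φ ⁻¹' ch.target
        target := ch.target ×ˢ Set.univ
        map_source' := fun p hp => ⟨hp, Set.mem_univ _⟩
        map_target' := by
          rintro ⟨v, q⟩ hz
          show φ (D (sect q) (ch.symm v)) ∈ ch.target
          rw [hDφ, hφch, ch.right_inv hz.1]
          exact hz.1
        left_inv' := by
          intro p hp
          obtain ⟨q, hpq⟩ := hexists p hp
          show D (sect (idx p)) (ch.symm (φ p)) = p
          rw [hidx p q hpq]
          obtain ⟨u, hu, hup⟩ := hpq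
          have hpu : φ p = ch u := by rw [← hup, hDφ, hφch]
          rw [hpu, ch.left_inv hu]
          exact hup
        right_inv' := by
          rintro ⟨v, q⟩ hz
          have h1 : φ (D (sect q) (ch.symm v)) = v := by
            rw [hDφ, hφch, ch.right_inv hz.1]
          have h2 : idx (D (sect q) (ch.symm v)) = q :=
            hidx _ _ ⟨ch.symm v, ch.map_target hz.1, rfl⟩
          exact Prod.ext h1 h2
        open_source := ch.open_target.preimage hreg.continuous
        open_target := ch.open_target.prod isOpen_univ
        continuousOn_toFun := by
          apply ContinuousOn.prodMk (hreg.continuous.continuousOn)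
          intro p hp
          apply ContinuousAt.continuousWithinAt
          obtain ⟨q, hpq⟩ := hexists p hp
          have hev : ∀ᶠ p' in nhds p, idx p' = q :=
            Filter.eventually_of_mem ((hSopen q).mem_nhds hpq) fun p' hp' => hidx p' q hp'
          exact continuousAt_const.congr (hev.mono fun p' h => h.symm)
        continuousOn_invFun := by
          rintro ⟨v, q⟩ hz
          have hO : (Set.univ ×ˢ {q} : Set (X × ↥(φ ⁻¹' {x}))) ∈ nhds (v, q) :=
            (isOpen_univ.prod (isOpen_discrete {q})).mem_nhds ⟨Set.mem_univ _, rfl⟩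
          rw [← continuousWithinAt_inter hO]
          have hg : ContinuousWithinAt
              (fun z : X × ↥(φ ⁻¹' {x}) => D (sect q) (ch.symm z.1))
              ((ch.target ×ˢ Set.univ) ∩ (Set.univ ×ˢ {q})) (v, q) := by
            have h1 : ContinuousWithinAt (fun z : X × ↥(φ ⁻¹' {x}) => ch.symm z.1)
                ((ch.target ×ˢ Set.univ) ∩ (Set.univ ×ˢ {q})) (v, q) := by
              refine (ch.continuousOn_symm v hz.1).comp continuousWithinAt_fst ?_
              exact fun z hzz => hzz.1.1
            exact ((hDcont (sect q)).continuousAt).comp_continuousWithinAt h1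
          refine hg.congr ?_ rfl
          rintro ⟨v', q'⟩ ⟨-, -, hq'⟩
          have : q' = q := hq'
          rw [this]
        baseSet := ch.target
        open_baseSet := ch.open_target
        source_eq := rfl
        target_eq := rfl
        proj_toFun := fun p _ => rfl }
    refine ⟨IsEvenlyCovered.of_trivialization (t := triv) hxbase, ?_⟩
    -- cardinality of the fiber
    rw [← hd]
    refine Nat.card_congr (Equiv.ofBijective
      (fun q : ↥(φ ⁻¹' {x}) => (QuotientGroup.mk (sect q) : N ⧸ K.subgroupOf N)) ⟨?_, ?_⟩)
    · intro q q' h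
      rw [QuotientGroup.eq, Subgroup.mem_subgroupOf] at h
      have hmaps : ∀ p, D (sect q') p = D (sect q) p := by
        intro p
        have hq : sect q' = sect q * ((sect q)⁻¹ * sect q') := by group
        rw [hq, ← hDcomp, hDone _ h]
      exact Subtype.ext (by rw [hsect q, hsect q', hmaps])
    · intro c
      refine QuotientGroup.induction_on c fun nn => ?_
      have hmem : D nn e₀ ∈ φ ⁻¹' {x} := by
        refine Set.mem_preimage.mpr ?_
        rw [hDφ]
        exact Set.mem_singleton_iff.mpr he₀
      refine ⟨⟨D nn e₀, hmem⟩, ?_⟩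
      rw [QuotientGroup.eq, Subgroup.mem_subgroupOf]
      set q : ↥(φ ⁻¹' {x}) := ⟨D nn e₀, hmem⟩ with hqdef
      have h' : D nn e₀ = D (sect q) e₀ := hsect q
      apply hDfree ((sect q)⁻¹ * nn) e₀
      rw [← hDcomp, h', hDinv]
  exact ⟨fun x => (key x).1, fun x => (key x).2⟩
end
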